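/- arXiv:1408.1858 — 5 statements merged into one kernel-verified Lean document; each statement's English description precedes it below -/
import Mathlib

section
/- Let T and S be functors from C to A preserving finite products and let φ : T ⟶ S be a natural transformation. Then the objectwise cokernel functor Q : C ⥤ A, defined by Q(c) = coker(φ_c) with the induced action on morphisms, preserves finite products. -/
open CategoryTheory Limits

attribute [local instance] CategoryTheory.Abelian.hasFiniteBiproducts

section Aux

variable {J : Type} [Fintype J] {A : Type*} [Category A] [Abelian A]

lemma pi_map_eq_aux {X Y : J → A} (u : ∀ j, X j ⟶ Y j) :
    Limits.Pi.map u = (biproduct.isoProduct X).inv ≫ biproduct.map u ≫ (biproduct.isoProduct Y).hom := by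
  aesop

lemma pi_map_comp_zero_aux {X Y Z : J → A} (u : ∀ j, X j ⟶ Y j) (q : ∀ j, Y j ⟶ Z j)
    (w : ∀ j, u j ≫ q j = 0) : Limits.Pi.map u ≫ Limits.Pi.map q = 0 := by
  ext j
  simp [w j]

/-- A finite product of cokernel coforks is a cokernel cofork. -/
noncomputable def piMapCokernelIsColimit {X Y Z : J → A} (u : ∀ j, X j ⟶ Y j)
    (q : ∀ j, Y j ⟶ Z j) (w : ∀ j, u j ≫ q j = 0)
    (hq : ∀ j, IsColimit (CokernelCofork.ofπ (q j) (w j))) :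
    IsColimit (CokernelCofork.ofπ (Limits.Pi.map q) (pi_map_comp_zero_aux u q w)) := by
  haveI : ∀ j, Epi (q j) := fun j => epi_of_isColimit_cofork (hq j)
  haveI : Epi (Limits.Pi.map q) := inferInstance
  refine CokernelCofork.IsColimit.ofπ' _ _ (fun {W} k hk => ?_)
  have cond : ∀ j, u j ≫ (biproduct.ι Y j ≫ (biproduct.isoProduct Y).hom ≫ k) = 0 := by
    intro j
    have h1 : biproduct.map u ≫ (biproduct.isoProduct Y).hom
        = (biproduct.isoProduct X).hom ≫ Limits.Pi.map u := by
      rw [pi_map_eq_aux u, Iso.hom_inv_id_assoc]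
    rw [← biproduct.ι_map_assoc, ← Category.assoc (biproduct.map u), h1]
    simp only [Category.assoc]
    rw [hk, comp_zero, comp_zero]
  let d : ∀ j, { l : Z j ⟶ W // q j ≫ l = biproduct.ι Y j ≫ (biproduct.isoProduct Y).hom ≫ k } :=
    fun j => CokernelCofork.IsColimit.desc' (hq j) _ (cond j)
  refine ⟨(biproduct.isoProduct Z).inv ≫ biproduct.desc (fun j => (d j).1), ?_⟩
  rw [pi_map_eq_aux q]
  simp only [Category.assoc, Iso.hom_inv_id_assoc]
  rw [Iso.inv_comp_eq]
  ext j
  simp [(d j).2]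

lemma piComparison_natural {C : Type*} [Category C] {F G : C ⥤ A} (α : F ⟶ G)
    (f : J → C) [HasProduct f] :
    α.app (∏ᶜ f) ≫ piComparison G f
      = piComparison F f ≫ Limits.Pi.map (fun j => α.app (f j)) := by
  ext j
  simp [piComparison, α.naturality]

end Aux

/-- Let `C` be a small category with finite products and `A` an abelian category.  If
`T S : C ⥤ A` preserve finite products and `φ : T ⟶ S` is a natural transformation, then
the cokernel of `φ` in the functor category (which is computed objectwise, i.e. its value
at `c` is `coker (φ.app c)`) again preserves finite products. -/
theorem cokernel_preservesFiniteProducts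
    (C : Type*) [SmallCategory C] [HasFiniteProducts C]
    (A : Type*) [Category A] [Abelian A]
    (T S : C ⥤ A) [PreservesFiniteProducts T] [PreservesFiniteProducts S]
    (φ : T ⟶ S) :
    PreservesFiniteProducts (cokernel φ : C ⥤ A) := by
  constructor
  intro n
  constructor
  intro K
  set f : Fin n → C := K.obj ∘ Discrete.mk with hf
  set b : C := ∏ᶜ f with hb
  set πφ : S ⟶ cokernel φ := cokernel.π φ with hπφ
  have wj : ∀ j : Fin n, φ.app (f j) ≫ πφ.app (f j) = 0 := by
    intro j
    rw [hπφ, ← NatTrans.comp_app, cokernel.condition]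
    simp
  have hqj : ∀ j : Fin n, IsColimit (CokernelCofork.ofπ (πφ.app (f j)) (wj j)) := fun j =>
    isColimitOfHasCokernelOfPreservesColimit ((evaluation C A).obj (f j)) φ
  have wb : φ.app b ≫ πφ.app b = 0 := by
    rw [hπφ, ← NatTrans.comp_app, cokernel.condition]
    simp
  have hc1 : IsColimit (CokernelCofork.ofπ (πφ.app b) wb) :=
    isColimitOfHasCokernelOfPreservesColimit ((evaluation C A).obj b) φ
  haveI : Epi (πφ.app b) := epi_of_isColimit_cofork hc1
  haveI : ∀ j : Fin n, Epi (πφ.app (f j)) := fun j => epi_of_isColimit_cofork (hqj j)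
  have hB := piMapCokernelIsColimit (fun j => φ.app (f j)) (fun j => πφ.app (f j)) wj hqj
  have nat1 : πφ.app b ≫ piComparison (cokernel φ) f
      = piComparison S f ≫ Limits.Pi.map (fun j => πφ.app (f j)) := piComparison_natural πφ f
  have nat2 : φ.app b ≫ piComparison S f
      = piComparison T f ≫ Limits.Pi.map (fun j => φ.app (f j)) := piComparison_natural φ f
  have cond2 : Limits.Pi.map (fun j => φ.app (f j)) ≫ inv (piComparison S f) ≫ πφ.app b = 0 := by
    have h2 : Limits.Pi.map (fun j => φ.app (f j))
        = inv (piComparison T f) ≫ φ.app b ≫ piComparison S f := by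
      rw [nat2, IsIso.inv_hom_id_assoc]
    rw [h2]
    simp only [Category.assoc, IsIso.hom_inv_id_assoc]
    rw [wb, comp_zero]
  obtain ⟨ψ, hψ⟩ := CokernelCofork.IsColimit.desc' hB (inv (piComparison S f) ≫ πφ.app b) cond2
  have hψ' : Limits.Pi.map (fun j => πφ.app (f j)) ≫ ψ
      = inv (piComparison S f) ≫ πφ.app b := by simpa using hψ
  haveI : IsIso (piComparison (cokernel φ) f) := by
    refine ⟨ψ, ?_, ?_⟩
    · rw [← cancel_epi (πφ.app b), ← Category.assoc, nat1, Category.assoc, hψ',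
        IsIso.hom_inv_id_assoc, Category.comp_id]
    · rw [← cancel_epi (Limits.Pi.map (fun j => πφ.app (f j))), ← Category.assoc, hψ',
        Category.assoc, nat1, IsIso.inv_hom_id_assoc, Category.comp_id]
  haveI := PreservesProduct.of_iso_comparison (cokernel φ) f
  exact preservesLimit_of_iso_diagram _ (Discrete.natIsoFunctor (F := K)).symm
end

section
/- Let T and S be objects of FPFunct(C, A) and φ : T ⟶ S a morphism between them. Let K be the objectwise kernel of φ (which again preserves finite products) and κ : K ⟶ T the natural transformation whose components are the kernel inclusions. Then κ is a kernel of φ in the category FPFunct(C, A): for every product-preserving functor L and every natural transformation λ : L ⟶ T with λ ≫ φ = 0, there is a unique natural transformation λ' : L ⟶ K with λ = λ' ≫ κ. -/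
open CategoryTheory Limits

/-- Let `C` be a small category with finite products and `A` an abelian category.  Let
`T S : C ⥤ A` preserve finite products, `φ : T ⟶ S`, and let `K = ker φ` be the
objectwise kernel of `φ` (which again preserves finite products) with kernel inclusion
`κ = kernel.ι φ : K ⟶ T`.  Then `κ` is a kernel of `φ` in the full subcategory of
finite-product-preserving functors: for every finite-product-preserving `L : C ⥤ A` and
every `λ : L ⟶ T` with `λ ≫ φ = 0` there is a unique `λ' : L ⟶ K` with `λ' ≫ κ = λ`. -/
theorem kernel_universal_in_FPFunct
    (C : Type*) [SmallCategory C] [HasFiniteProducts C]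
    (A : Type*) [Category A] [Abelian A]
    (T S : C ⥤ A) [PreservesFiniteProducts T] [PreservesFiniteProducts S]
    (φ : T ⟶ S) :
    PreservesFiniteProducts (kernel φ : C ⥤ A) ∧
    ∀ (L : C ⥤ A), PreservesFiniteProducts L →
      ∀ (l : L ⟶ T), l ≫ φ = 0 →
        ∃! l' : L ⟶ kernel φ, l' ≫ kernel.ι φ = l := by
  constructor
  · constructor
    intro n
    let J := Fin n
    show PreservesLimitsOfShape (Discrete J) (kernel φ)
    have h1 : PreservesLimitsOfShape (Discrete J) ((parallelPair φ 0).flip) := by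
      apply preservesLimitsOfShape_of_evaluation
      intro k
      have e : (parallelPair φ 0).flip ⋙ (evaluation WalkingParallelPair A).obj k ≅ (parallelPair φ 0).obj k :=
        flipCompEvaluation _ _
      cases k with
      | zero =>
        haveI : PreservesLimitsOfShape (Discrete J)
            ((parallelPair φ 0).obj WalkingParallelPair.zero) :=
          inferInstanceAs (PreservesLimitsOfShape (Discrete J) T)
        exact preservesLimitsOfShape_of_natIso e.symm
      | one =>
        haveI : PreservesLimitsOfShape (Discrete J)
            ((parallelPair φ 0).obj WalkingParallelPair.one) :=
          inferInstanceAs (PreservesLimitsOfShape (Discrete J) S)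
        exact preservesLimitsOfShape_of_natIso e.symm
    have h2 : PreservesLimitsOfShape (Discrete J)
        (lim : (WalkingParallelPair ⥤ A) ⥤ A) :=
      constLimAdj.rightAdjoint_preservesLimits.preservesLimitsOfShape
    have h3 : PreservesLimitsOfShape (Discrete J)
        ((parallelPair φ 0).flip ⋙ (lim : (WalkingParallelPair ⥤ A) ⥤ A)) :=
      comp_preservesLimitsOfShape _ _
    exact preservesLimitsOfShape_of_natIso (limitIsoFlipCompLim (parallelPair φ 0)).symm
  · intro L _ l hl
    exact ⟨kernel.lift φ l hl, kernel.lift_ι _ _ _, fun l' h => by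
      rw [← cancel_mono (kernel.ι φ), h, kernel.lift_ι]⟩
end

section
/- A morphism φ : T ⟶ S in FPFunct(C, A) is a monomorphism in FPFunct(C, A) if and only if every component φ_c is a monomorphism in A, and φ is an epimorphism in FPFunct(C, A) if and only if every component φ_c is an epimorphism in A. -/
open CategoryTheory Limits

/-- `FPFunct C A` is the full subcategory of `C ⥤ A` consisting of the functors
preserving finite products. -/
abbrev FPFunct (C : Type*) [Category C] (A : Type*) [Category A] :=
  ObjectProperty.FullSubcategory (fun F : C ⥤ A => PreservesFiniteProducts F)

section Aux

variable {C : Type*} [SmallCategory C] [HasFiniteProducts C]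
  {A : Type*} [Category A] [Abelian A]

/-- The component of `kernel.ι ψ` at `x` is a kernel of `ψ.app x`. -/
noncomputable def FPAux.kerApp {T S : C ⥤ A} (ψ : T ⟶ S) (x : C) :
    IsLimit (KernelFork.ofι ((kernel.ι ψ).app x)
      (by rw [← NatTrans.comp_app, kernel.condition, zero_app]) : KernelFork (ψ.app x)) :=
  isLimitOfHasKernelOfPreservesLimit ((evaluation C A).obj x) ψ

/-- The component of `cokernel.π ψ` at `x` is a cokernel of `ψ.app x`. -/
noncomputable def FPAux.cokerApp {T S : C ⥤ A} (ψ : T ⟶ S) (x : C) :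
    IsColimit (CokernelCofork.ofπ ((cokernel.π ψ).app x)
      (by rw [← NatTrans.comp_app, cokernel.condition, zero_app]) : CokernelCofork (ψ.app x)) :=
  isColimitOfHasCokernelOfPreservesColimit ((evaluation C A).obj x) ψ

/-- The kernel (in the functor category) of a natural transformation between
finite-product-preserving functors preserves finite products. -/
lemma FPAux.fp_ker {T S : C ⥤ A} [PreservesFiniteProducts T] [PreservesFiniteProducts S]
    (ψ : T ⟶ S) : PreservesFiniteProducts (kernel ψ) := by
  constructor
  intro n
  suffices ∀ (J : Type) [Fintype J], PreservesLimitsOfShape (Discrete J) _ from this _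
  intro J _
  constructor
  intro D
  apply preservesLimit_of_preserves_limit_cone (limit.isLimit D)
  have hT : IsLimit (T.mapCone (limit.cone D)) := isLimitOfPreserves T (limit.isLimit D)
  have hS : IsLimit (S.mapCone (limit.cone D)) := isLimitOfPreserves S (limit.isLimit D)
  have hcond : ∀ (s : Cone (D ⋙ kernel ψ)),
      hT.lift ((Cone.postcompose (Functor.whiskerLeft D (kernel.ι ψ))).obj s) ≫ ψ.app (limit D) = 0 := by
    intro s
    apply hS.hom_ext
    intro j
    have h1 := hT.fac ((Cone.postcompose (Functor.whiskerLeft D (kernel.ι ψ))).obj s) j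
    simp only [Functor.mapCone_pt, Functor.mapCone_π_app, limit.cone_π,
      Cone.postcompose_obj_pt, Cone.postcompose_obj_π, NatTrans.comp_app,
      Functor.whiskerLeft_app] at h1 ⊢
    rw [Category.assoc, ← ψ.naturality, ← Category.assoc, h1, Category.assoc,
      ← NatTrans.comp_app, kernel.condition, zero_app, comp_zero, zero_comp]
  refine ⟨fun s => (KernelFork.IsLimit.lift' (FPAux.kerApp ψ (limit D))
      (hT.lift ((Cone.postcompose (Functor.whiskerLeft D (kernel.ι ψ))).obj s)) (hcond s)).1,
    fun s j => ?_, fun s m hm => ?_⟩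
  · have hl := (KernelFork.IsLimit.lift' (FPAux.kerApp ψ (limit D))
      (hT.lift ((Cone.postcompose (Functor.whiskerLeft D (kernel.ι ψ))).obj s)) (hcond s)).2
    have h1 := hT.fac ((Cone.postcompose (Functor.whiskerLeft D (kernel.ι ψ))).obj s) j
    rw [← cancel_mono ((kernel.ι ψ).app (D.obj j))]
    simp only [Functor.mapCone_pt, Functor.mapCone_π_app, limit.cone_π,
      Cone.postcompose_obj_pt, Cone.postcompose_obj_π, NatTrans.comp_app,
      Functor.whiskerLeft_app] at h1 ⊢
    rw [Category.assoc, (kernel.ι ψ).naturality, ← Category.assoc]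
    erw [hl]
    rw [h1]
  · have hl := (KernelFork.IsLimit.lift' (FPAux.kerApp ψ (limit D))
      (hT.lift ((Cone.postcompose (Functor.whiskerLeft D (kernel.ι ψ))).obj s)) (hcond s)).2
    rw [← cancel_mono ((kernel.ι ψ).app (limit D))]
    erw [hl]
    apply hT.hom_ext
    intro j
    have h1 := hT.fac ((Cone.postcompose (Functor.whiskerLeft D (kernel.ι ψ))).obj s) j
    have h2 := hm j
    simp only [Functor.mapCone_pt, Functor.mapCone_π_app, limit.cone_π,
      Cone.postcompose_obj_pt, Cone.postcompose_obj_π, NatTrans.comp_app,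
      Functor.whiskerLeft_app] at h1 h2 ⊢
    rw [Category.assoc, ← (kernel.ι ψ).naturality, ← Category.assoc, h2, h1]

/-- The cokernel (in the functor category) of a natural transformation between
finite-product-preserving functors preserves finite products. -/
lemma FPAux.fp_coker {T S : C ⥤ A} [PreservesFiniteProducts T] [PreservesFiniteProducts S]
    (ψ : T ⟶ S) : PreservesFiniteProducts (cokernel ψ) := by
  constructor
  intro n
  suffices ∀ (J : Type) [Fintype J], PreservesLimitsOfShape (Discrete J) _ from this _
  intro J _
  constructor
  intro D
  apply preservesLimit_of_preserves_limit_cone (limit.isLimit D)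
  have hT : IsLimit (T.mapCone (limit.cone D)) := isLimitOfPreserves T (limit.isLimit D)
  have hS : IsLimit (S.mapCone (limit.cone D)) := isLimitOfPreserves S (limit.isLimit D)
  classical
  obtain ⟨σT, hσT⟩ : { σ : ∀ j : Discrete J, T.obj (D.obj j) ⟶ T.obj (limit D)
      // ∀ j k, σ j ≫ T.map (limit.π D k) =
        if h : j = k then eqToHom (by subst h; rfl) else 0 } :=
    ⟨fun j => hT.lift ⟨T.obj (D.obj j), Discrete.natTrans fun k =>
        if h : j = k then eqToHom (by subst h; rfl) else 0⟩,
     fun j k => hT.fac _ k⟩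
  obtain ⟨σS, hσS⟩ : { σ : ∀ j : Discrete J, S.obj (D.obj j) ⟶ S.obj (limit D)
      // ∀ j k, σ j ≫ S.map (limit.π D k) =
        if h : j = k then eqToHom (by subst h; rfl) else 0 } :=
    ⟨fun j => hS.lift ⟨S.obj (D.obj j), Discrete.natTrans fun k =>
        if h : j = k then eqToHom (by subst h; rfl) else 0⟩,
     fun j k => hS.fac _ k⟩
  have comm : ∀ j, ψ.app (D.obj j) ≫ σS j = σT j ≫ ψ.app (limit D) := by
    intro j
    apply hS.hom_ext
    intro k
    simp only [Functor.mapCone_pt, Functor.mapCone_π_app, limit.cone_π]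
    rw [Category.assoc, hσS j k, Category.assoc, ← ψ.naturality (limit.π D k),
      ← Category.assoc, hσT j k]
    split_ifs with h
    · subst h; simp
    · simp
  have hz : ∀ j : Discrete J,
      ψ.app (D.obj j) ≫ (σS j ≫ (cokernel.π ψ).app (limit D)) = 0 := by
    intro j
    rw [← Category.assoc, comm j, Category.assoc, ← NatTrans.comp_app,
      cokernel.condition, zero_app, comp_zero]
  obtain ⟨σQ, hσQ⟩ : { σ : ∀ j : Discrete J,
      (cokernel ψ).obj (D.obj j)
      ⟶ (cokernel ψ).obj (limit D) //
      ∀ j, (cokernel.π ψ).app (D.obj j) ≫ σ j = σS j ≫ (cokernel.π ψ).app (limit D) } :=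
    ⟨fun j => (CokernelCofork.IsColimit.desc' (FPAux.cokerApp ψ (D.obj j)) _ (hz j)).1,
     fun j => (CokernelCofork.IsColimit.desc' (FPAux.cokerApp ψ (D.obj j)) _ (hz j)).2⟩
  have hQmap : ∀ j k, σQ j ≫ (cokernel ψ).map (limit.π D k) =
      if h : j = k then eqToHom (by subst h; rfl) else 0 := by
    intro j k
    rw [← cancel_epi ((cokernel.π ψ).app (D.obj j)), ← Category.assoc, hσQ j,
      Category.assoc, ← (cokernel.π ψ).naturality (limit.π D k), ← Category.assoc, hσS j k]
    split_ifs with h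
    · subst h; simp
    · simp
  have hSid : ∑ j : J, S.map (limit.π D ⟨j⟩) ≫ σS ⟨j⟩ = 𝟙 (S.obj (limit D)) := by
    apply hS.hom_ext
    rintro ⟨k⟩
    simp only [Functor.mapCone_pt, Functor.mapCone_π_app, limit.cone_π,
      Preadditive.sum_comp, Category.assoc, hσS, Category.id_comp]
    rw [Finset.sum_eq_single k]
    · simp
    · intro b _ hb
      rw [dif_neg (by simpa using hb), comp_zero]
    · intro h; exact absurd (Finset.mem_univ k) h
  have htot : ∑ j : J, (cokernel ψ).map (limit.π D ⟨j⟩) ≫ σQ ⟨j⟩ =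
      𝟙 ((cokernel ψ).obj (limit D)) := by
    rw [← cancel_epi ((cokernel.π ψ).app (limit D)), Preadditive.comp_sum, Category.comp_id]
    have : ∀ j : J, (cokernel.π ψ).app (limit D) ≫
        (cokernel ψ).map (limit.π D ⟨j⟩) ≫ σQ ⟨j⟩ =
        (S.map (limit.π D ⟨j⟩) ≫ σS ⟨j⟩) ≫ (cokernel.π ψ).app (limit D) := by
      intro j
      rw [← Category.assoc, ← (cokernel.π ψ).naturality (limit.π D ⟨j⟩),
        Category.assoc, hσQ, ← Category.assoc]
    simp only [this]
    rw [← Preadditive.sum_comp, hSid, Category.id_comp]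
  refine ⟨fun s => ∑ j : J, s.π.app ⟨j⟩ ≫ σQ ⟨j⟩, fun s j => ?_, fun s m hm => ?_⟩
  · obtain ⟨k⟩ := j
    simp only [Functor.mapCone_pt, Functor.mapCone_π_app, limit.cone_π,
      Preadditive.sum_comp, Category.assoc, hQmap]
    rw [Finset.sum_eq_single k]
    · simp
    · intro b _ hb
      rw [dif_neg (by simpa using hb), comp_zero]
    · intro h; exact absurd (Finset.mem_univ k) h
  · have hmm : m ≫ 𝟙 ((cokernel ψ).obj (limit D)) = ∑ j : J, s.π.app ⟨j⟩ ≫ σQ ⟨j⟩ := by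
      rw [← htot, Preadditive.comp_sum]
      refine Finset.sum_congr rfl fun j _ => ?_
      rw [← Category.assoc]
      have h2 := hm ⟨j⟩
      simp only [Functor.mapCone_pt, Functor.mapCone_π_app, limit.cone_π] at h2
      rw [h2]
    simpa using hmm

end Aux

/-- Let `C` be a small category with finite products and `A` an abelian category.  A
morphism `φ : T ⟶ S` in `FPFunct C A` is a monomorphism there iff all of its components
are monomorphisms in `A`, and an epimorphism there iff all of its components are
epimorphisms in `A`. -/
theorem fpfunct_mono_epi_iff_componentwise
    (C : Type*) [SmallCategory C] [HasFiniteProducts C]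
    (A : Type*) [Category A] [Abelian A]
    (T S : FPFunct C A) (φ : T ⟶ S) :
    (Mono φ ↔ ∀ c : C, Mono (φ.hom.app c)) ∧
    (Epi φ ↔ ∀ c : C, Epi (φ.hom.app c)) := by
  haveI := T.property
  haveI := S.property
  set ψ : T.obj ⟶ S.obj := φ.hom with hψ
  constructor
  · constructor
    · intro hmono c
      have h0 : (show (⟨kernel ψ, FPAux.fp_ker ψ⟩ : FPFunct C A) ⟶ T from ObjectProperty.homMk (kernel.ι ψ)) ≫ φ =
          (show (⟨kernel ψ, FPAux.fp_ker ψ⟩ : FPFunct C A) ⟶ T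
            from ObjectProperty.homMk (0 : kernel ψ ⟶ T.obj)) ≫ φ := by
        apply ObjectProperty.hom_ext
        show kernel.ι ψ ≫ ψ = (0 : kernel ψ ⟶ T.obj) ≫ ψ
        rw [kernel.condition, zero_comp]
      have h1 : kernel.ι ψ = (0 : kernel ψ ⟶ T.obj) := congrArg InducedCategory.Hom.hom ((cancel_mono φ).mp h0)
      haveI : Mono ψ := Abelian.mono_of_kernel_ι_eq_zero ψ h1
      exact inferInstanceAs (Mono (ψ.app c))
    · intro h
      haveI : Mono ψ := NatTrans.mono_of_mono_app ψ
      exact ⟨fun {Z} g h' w => InducedCategory.hom_ext ((cancel_mono ψ).mp (congrArg InducedCategory.Hom.hom w))⟩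
  · constructor
    · intro hepi c
      have h0 : φ ≫ (show S ⟶ (⟨cokernel ψ, FPAux.fp_coker ψ⟩ : FPFunct C A)
            from ObjectProperty.homMk (cokernel.π ψ)) =
          φ ≫ (show S ⟶ (⟨cokernel ψ, FPAux.fp_coker ψ⟩ : FPFunct C A)
            from ObjectProperty.homMk (0 : S.obj ⟶ cokernel ψ)) := by
        apply ObjectProperty.hom_ext
        show ψ ≫ cokernel.π ψ = ψ ≫ (0 : S.obj ⟶ cokernel ψ)
        rw [cokernel.condition, comp_zero]
      have h1 : cokernel.π ψ = (0 : S.obj ⟶ cokernel ψ) := congrArg InducedCategory.Hom.hom ((cancel_epi φ).mp h0)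
      haveI : Epi ψ := Abelian.epi_of_cokernel_π_eq_zero ψ h1
      exact inferInstanceAs (Epi (ψ.app c))
    · intro h
      haveI : Epi ψ := NatTrans.epi_of_epi_app ψ
      exact ⟨fun {Z} g h' w => InducedCategory.hom_ext ((cancel_epi ψ).mp (congrArg InducedCategory.Hom.hom w))⟩
end

section
/- Every morphism φ : T ⟶ S in FPFunct(C, A) factors as an epimorphism followed by a monomorphism within FPFunct(C, A); in particular, the objectwise image functor I : C ⥤ A, defined by I(c) = im(φ_c) with the induced action on morphisms, preserves finite products, and φ factors through I as an objectwise epimorphism followed by an objectwise monomorphism. -/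
open CategoryTheory Limits

section Aux

variable {C : Type*} [SmallCategory C] [HasFiniteProducts C]
  {A : Type*} [Category A] [Abelian A]
  {T S : C ⥤ A} [PreservesFiniteProducts T] [PreservesFiniteProducts S]

lemma fpfunct_image_preserves_product (φ : T ⟶ S) (J : Type) [Fintype J] (f : J → C) :
    PreservesLimit (Discrete.functor f) (image φ : C ⥤ A) := by
  haveI : HasFiniteBiproducts A := Abelian.hasFiniteBiproducts (C := A)
  set I : C ⥤ A := image φ with hI
  set e : T ⟶ I := factorThruImage φ with he
  set m : I ⟶ S := image.ι φ with hm
  have hem : e ≫ m = φ := image.fac φ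
  set P : C := ∏ᶜ f with hP
  -- pointwise epi/mono
  have hEpi : ∀ c : C, Epi (e.app c) := fun c => inferInstance
  have hMono : ∀ c : C, Mono (m.app c) := fun c => inferInstance
  -- comparison maps
  have hT : IsIso (piComparison T f) := inferInstance
  have hS : IsIso (piComparison S f) := inferInstance
  set E : (∏ᶜ fun j => T.obj (f j)) ⟶ (∏ᶜ fun j => I.obj (f j)) :=
    Limits.Pi.map (f := fun j => T.obj (f j)) (g := fun j => I.obj (f j)) (fun j => e.app (f j)) with hE
  set M : (∏ᶜ fun j => I.obj (f j)) ⟶ (∏ᶜ fun j => S.obj (f j)) :=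
    Limits.Pi.map (f := fun j => I.obj (f j)) (g := fun j => S.obj (f j)) (fun j => m.app (f j)) with hM
  have hEpiE : Epi E := by
    have : ∀ j, Epi (e.app (f j)) := fun j => hEpi _
    exact Pi.map_epi _
  have hMonoM : Mono M := by
    have : ∀ j, Mono (m.app (f j)) := fun j => hMono _
    exact Pi.map_mono _
  have comm1 : piComparison T f ≫ E = e.app P ≫ piComparison I f := by
    ext j
    simp only [hE, Category.assoc, limMap_π, Discrete.natTrans_app, Discrete.functor_obj,
      piComparison_comp_π, piComparison_comp_π_assoc, ← e.naturality, Pi.map_π]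
  have comm2 : piComparison I f ≫ M = m.app P ≫ piComparison S f := by
    ext j
    simp only [hM, Category.assoc, limMap_π, Discrete.natTrans_app, Discrete.functor_obj,
      piComparison_comp_π, piComparison_comp_π_assoc, ← m.naturality, Pi.map_π]
  -- the two factorisations of φ.app P
  have h3 : (piComparison T f ≫ E) ≫ M = φ.app P ≫ piComparison S f := by
    rw [comm1, Category.assoc, comm2, ← Category.assoc, ← NatTrans.comp_app, hem]
  have hfac2 : (piComparison T f ≫ E) ≫ (M ≫ inv (piComparison S f)) = φ.app P := by
    rw [← Category.assoc, h3, Category.assoc, IsIso.hom_inv_id, Category.comp_id]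
  have hEpi2 : Epi (piComparison T f ≫ E) := epi_comp _ _
  have hMono2 : Mono (M ≫ inv (piComparison S f)) := mono_comp _ _
  let F1 : StrongEpiMonoFactorisation (φ.app P) :=
    { I := I.obj P
      m := m.app P
      e := e.app P
      fac := by rw [← hem]; simp
      m_mono := hMono P
      e_strong_epi := strongEpi_of_epi _ }
  let F2 : StrongEpiMonoFactorisation (φ.app P) :=
    { I := ∏ᶜ fun j => I.obj (f j)
      m := M ≫ inv (piComparison S f)
      e := piComparison T f ≫ E
      fac := hfac2
      m_mono := hMono2
      e_strong_epi := strongEpi_of_epi _ }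
  let iso := IsImage.isoExt F1.toMonoIsImage F2.toMonoIsImage
  have hiso : piComparison I f = iso.hom := by
    have h1 : e.app P ≫ iso.hom = piComparison T f ≫ E :=
      IsImage.e_isoExt_hom F1.toMonoIsImage F2.toMonoIsImage
    rw [← cancel_epi (e.app P), h1, comm1]
  have : IsIso (piComparison I f) := by rw [hiso]; infer_instance
  exact PreservesProduct.of_iso_comparison I f

end Aux

/-- Let `C` be a small category with finite products and `A` an abelian category, and let
`T S : C ⥤ A` preserve finite products.  Every natural transformation `φ : T ⟶ S` factors,
within the finite-product-preserving functors, as an epimorphism followed by a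
monomorphism: the objectwise image functor `image φ` (whose value at `c` is `im (φ.app c)`)
preserves finite products, and `φ` factors through it as an objectwise epimorphism
followed by an objectwise monomorphism. -/
theorem fpfunct_epi_mono_factorisation
    (C : Type*) [SmallCategory C] [HasFiniteProducts C]
    (A : Type*) [Category A] [Abelian A]
    (T S : C ⥤ A) [PreservesFiniteProducts T] [PreservesFiniteProducts S]
    (φ : T ⟶ S) :
    PreservesFiniteProducts (image φ : C ⥤ A) ∧
    (∀ c : C, Epi ((factorThruImage φ).app c)) ∧
    (∀ c : C, Mono ((image.ι φ).app c)) ∧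
    factorThruImage φ ≫ image.ι φ = φ := by
  refine ⟨⟨fun n => ⟨fun {K} => ?_⟩⟩, fun c => inferInstance, fun c => inferInstance,
    image.fac φ⟩
  have := fpfunct_image_preserves_product φ (Fin n) (K.obj ∘ Discrete.mk)
  exact preservesLimit_of_iso_diagram _ Discrete.natIsoFunctor.symm
end

section
/- Let C be a small category with finite products and let A be an abelian category. Then the category FPFunct(C, A) of finite-product-preserving functors from C to A is an abelian category, with kernels and cokernels computed objectwise (i.e., the inclusion FPFunct(C, A) → (C ⥤ A) preserves kernels and cokernels). -/
open CategoryTheory Limits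

section Aux

variable {C : Type*} [Category C] {A : Type*} [Category A]

/-- Finite-product preserving functors are closed under any (objectwise) limits. -/
theorem fp_closed_under_limits (J : Type*) [Category J] [HasLimitsOfShape J A] :
    ObjectProperty.IsClosedUnderLimitsOfShape (fun F : C ⥤ A => PreservesFiniteProducts F) J := by
  suffices H : ∀ (K : J ⥤ C ⥤ A) (c : Cone K) (hc : IsLimit c)
      (hK : ∀ j, PreservesFiniteProducts (K.obj j)), PreservesFiniteProducts c.pt from
    ⟨fun _ ⟨h⟩ => H _ _ h.isLimit h.prop_diag_obj⟩
  intro K c hc hK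
  have hK' : ∀ j, PreservesFiniteProducts (K.obj j) := hK
  have : HasLimit K := ⟨_, hc⟩
  have e : c.pt ≅ K.flip ⋙ lim :=
    hc.conePointUniqueUpToIso (limit.isLimit K) ≪≫ limitIsoFlipCompLim K
  constructor
  intro n
  generalize hI : Fin n = I
  haveI : Fintype I := hI ▸ inferInstance
  have h1 : PreservesLimitsOfShape (Discrete I) K.flip := by
    apply preservesLimitsOfShape_of_evaluation
    intro j
    exact preservesLimitsOfShape_of_natIso (flipCompEvaluation K j).symm
  have h2 : PreservesLimitsOfSize.{0, 0} (lim : (J ⥤ A) ⥤ A) :=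
    preservesSmallestLimits_of_preservesLimits _
  have h3 : PreservesLimitsOfShape (Discrete I) (K.flip ⋙ lim) :=
    comp_preservesLimitsOfShape _ _
  exact preservesLimitsOfShape_of_natIso e.symm

/-- Finite-product preserving functors into a preadditive category are closed under
any (objectwise) colimits. -/
theorem fp_closed_under_colimits (J : Type*) [Category J] [Preadditive A]
    [HasColimitsOfShape J A] :
    ObjectProperty.IsClosedUnderColimitsOfShape (fun F : C ⥤ A => PreservesFiniteProducts F) J := by
  suffices H : ∀ (K : J ⥤ C ⥤ A) (c : Cocone K) (hc : IsColimit c)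
      (hK : ∀ j, PreservesFiniteProducts (K.obj j)), PreservesFiniteProducts c.pt from
    ⟨fun _ ⟨h⟩ => H _ _ h.isColimit h.prop_diag_obj⟩
  intro K c hc hK
  have hK' : ∀ j, PreservesFiniteProducts (K.obj j) := hK
  have : HasColimit K := ⟨_, hc⟩
  have e : c.pt ≅ K.flip ⋙ colim :=
    hc.coconePointUniqueUpToIso (colimit.isColimit K) ≪≫ colimitIsoFlipCompColim K
  constructor
  intro n
  generalize hI : Fin n = I
  haveI : Fintype I := hI ▸ inferInstance
  have h1 : PreservesLimitsOfShape (Discrete I) K.flip := by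
    apply preservesLimitsOfShape_of_evaluation
    intro j
    exact preservesLimitsOfShape_of_natIso (flipCompEvaluation K j).symm
  have h2 : PreservesLimitsOfShape (Discrete I) (colim : (J ⥤ A) ⥤ A) :=
    preservesProductsOfShape_of_preservesBiproductsOfShape _
  have h3 : PreservesLimitsOfShape (Discrete I) (K.flip ⋙ colim) :=
    comp_preservesLimitsOfShape _ _
  exact preservesLimitsOfShape_of_natIso e.symm

/-- If `ι : D ⥤ E` is an additive functor from a preadditive category with kernels and
cokernels to an abelian category, which preserves kernels and cokernels and reflects
isomorphisms, then the coimage-image comparison in `D` is an isomorphism. -/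
theorem isIso_coimageImageComparison_of_reflects
    {D : Type*} [Category D] [Preadditive D] [HasKernels D] [HasCokernels D]
    {E : Type*} [Category E] [Abelian E]
    (ι : D ⥤ E) [ι.Additive] [ι.ReflectsIsomorphisms]
    [PreservesLimitsOfShape WalkingParallelPair ι]
    [PreservesColimitsOfShape WalkingParallelPair ι]
    {X Y : D} (f : X ⟶ Y) : IsIso (Abelian.coimageImageComparison f) := by
  have hθ : IsIso (kernelComparison f ι) := inferInstance
  have hμ : IsIso (cokernelComparison f ι) := inferInstance
  let θ : ι.obj (kernel f) ≅ kernel (ι.map f) := asIso (kernelComparison f ι)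
  let μ : cokernel (ι.map f) ≅ ι.obj (cokernel f) := asIso (cokernelComparison f ι)
  have hθ1 : θ.hom ≫ kernel.ι (ι.map f) = ι.map (kernel.ι f) := kernelComparison_comp_ι f ι
  have hμ1 : cokernel.π (ι.map f) ≫ μ.hom = ι.map (cokernel.π f) := π_comp_cokernelComparison f ι
  have hθ2 : kernel.ι (ι.map f) = θ.inv ≫ ι.map (kernel.ι f) := by
    rw [← hθ1, Iso.inv_hom_id_assoc]
  have hμ2 : cokernel.π (ι.map f) = ι.map (cokernel.π f) ≫ μ.inv := by
    rw [← hμ1, Category.assoc, Iso.hom_inv_id, Category.comp_id]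
  -- `ι.map (cokernel.π (kernel.ι f))` is a cokernel of `kernel.ι (ι.map f)`
  have hco : IsColimit (CokernelCofork.ofπ (ι.map (cokernel.π (kernel.ι f)))
      (by simp only [← ι.map_comp, cokernel.condition, Functor.map_zero]) :
        CokernelCofork (ι.map (kernel.ι f))) :=
    isColimitCoforkMapOfIsColimit' ι (cokernel.condition _) (cokernelIsCokernel (kernel.ι f))
  have hco2 : IsColimit (CokernelCofork.ofπ (ι.map (cokernel.π (kernel.ι f))) (by
        rw [hθ2, Category.assoc, ← ι.map_comp, cokernel.condition, Functor.map_zero, comp_zero]) :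
        CokernelCofork (kernel.ι (ι.map f))) :=
    isCokernelEpiComp hco θ.inv hθ2
  -- `ι.map (kernel.ι (cokernel.π f))` is a kernel of `cokernel.π (ι.map f)`
  have hki : IsLimit (KernelFork.ofι (ι.map (kernel.ι (cokernel.π f)))
      (by simp only [← ι.map_comp, kernel.condition, Functor.map_zero]) :
        KernelFork (ι.map (cokernel.π f))) :=
    isLimitForkMapOfIsLimit' ι (kernel.condition _) (kernelIsKernel (cokernel.π f))
  have hki2 : IsLimit (KernelFork.ofι (ι.map (kernel.ι (cokernel.π f))) (by
        rw [hμ2, ← Category.assoc, ← ι.map_comp, kernel.condition, Functor.map_zero, zero_comp]) :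
        KernelFork (cokernel.π (ι.map f))) :=
    isKernelCompMono hki μ.inv hμ2
  -- transfer the comparison morphism along the induced isomorphisms
  let α : cokernel (kernel.ι (ι.map f)) ≅ ι.obj (cokernel (kernel.ι f)) :=
    (cokernelIsCokernel (kernel.ι (ι.map f))).coconePointUniqueUpToIso hco2
  let β := hki2.conePointUniqueUpToIso (kernelIsKernel (cokernel.π (ι.map f)))
  have hα : cokernel.π (kernel.ι (ι.map f)) ≫ α.hom = ι.map (cokernel.π (kernel.ι f)) :=
    (cokernelIsCokernel (kernel.ι (ι.map f))).comp_coconePointUniqueUpToIso_hom hco2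
      WalkingParallelPair.one
  have hβ : β.hom ≫ kernel.ι (cokernel.π (ι.map f)) = ι.map (kernel.ι (cokernel.π f)) :=
    hki2.conePointUniqueUpToIso_hom_comp (kernelIsKernel (cokernel.π (ι.map f)))
      WalkingParallelPair.zero
  have key : Abelian.coimageImageComparison (ι.map f) =
      α.hom ≫ ι.map (Abelian.coimageImageComparison f) ≫ β.hom := by
    have hfac := Abelian.coimage_image_factorisation f
    have h3 : Abelian.coimage.π f = cokernel.π (kernel.ι f) := rfl
    have h4 : Abelian.image.ι f = kernel.ι (cokernel.π f) := rfl
    rw [h3, h4] at hfac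
    have h1 : Abelian.coimage.π (ι.map f) = cokernel.π (kernel.ι (ι.map f)) := rfl
    have h2 : Abelian.image.ι (ι.map f) = kernel.ι (cokernel.π (ι.map f)) := rfl
    rw [← cancel_epi (Abelian.coimage.π (ι.map f)), ← cancel_mono (Abelian.image.ι (ι.map f))]
    simp only [Category.assoc]
    rw [Abelian.coimage_image_factorisation (ι.map f)]
    rw [h1, h2, hβ, reassoc_of% hα, ← ι.map_comp, ← ι.map_comp, hfac]
  have hiso : IsIso (α.hom ≫ ι.map (Abelian.coimageImageComparison f) ≫ β.hom) := by
    rw [← key]; infer_instance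
  have h5 : ι.map (Abelian.coimageImageComparison f) =
      α.inv ≫ (α.hom ≫ ι.map (Abelian.coimageImageComparison f) ≫ β.hom) ≫ β.inv := by
    simp
  have : IsIso (ι.map (Abelian.coimageImageComparison f)) := by
    rw [h5]; infer_instance
  exact isIso_of_reflects_iso _ ι

end Aux

/-- Let `C` be a small category with finite products and `A` an abelian category.  Then
the category `FPFunct C A` of finite-product-preserving functors `C ⥤ A` is abelian, and
kernels and cokernels in it are computed objectwise: the inclusion into the functor
category `C ⥤ A` (where (co)limits are objectwise) preserves kernels and cokernels. -/
theorem fpfunct_abelian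
    (C : Type*) [SmallCategory C] [HasFiniteProducts C]
    (A : Type*) [Category A] [Abelian A] :
    (∃ _ : Abelian (FPFunct C A), True) ∧
    PreservesLimitsOfShape WalkingParallelPair
      (ObjectProperty.ι (fun F : C ⥤ A => PreservesFiniteProducts F)) ∧
    PreservesColimitsOfShape WalkingParallelPair
      (ObjectProperty.ι (fun F : C ⥤ A => PreservesFiniteProducts F)) := by
  -- The inclusion creates (hence preserves) kernels and cokernels
  haveI : CreatesLimitsOfShape WalkingParallelPair
      (ObjectProperty.ι (fun F : C ⥤ A => PreservesFiniteProducts F)) :=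
    by haveI := fp_closed_under_limits (C := C) (A := A) WalkingParallelPair; infer_instance
  haveI : CreatesColimitsOfShape WalkingParallelPair
      (ObjectProperty.ι (fun F : C ⥤ A => PreservesFiniteProducts F)) :=
    by haveI := fp_closed_under_colimits (C := C) (A := A) WalkingParallelPair; infer_instance
  haveI hpl : PreservesLimitsOfShape WalkingParallelPair
      (ObjectProperty.ι (fun F : C ⥤ A => PreservesFiniteProducts F)) := inferInstance
  haveI hpc : PreservesColimitsOfShape WalkingParallelPair
      (ObjectProperty.ι (fun F : C ⥤ A => PreservesFiniteProducts F)) := inferInstance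
  refine ⟨?_, hpl, hpc⟩
  -- Now construct the abelian structure
  haveI : HasLimitsOfShape WalkingParallelPair (FPFunct C A) :=
    by haveI := fp_closed_under_limits (C := C) (A := A) WalkingParallelPair; infer_instance
  haveI : HasColimitsOfShape WalkingParallelPair (FPFunct C A) :=
    by haveI := fp_closed_under_colimits (C := C) (A := A) WalkingParallelPair; infer_instance
  haveI : HasFiniteProducts (FPFunct C A) :=
    ⟨fun n => by haveI := fp_closed_under_limits (C := C) (A := A) (Discrete (Fin n)); infer_instance⟩
  haveI : HasKernels (FPFunct C A) := ⟨fun _ => inferInstance⟩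
  haveI : HasCokernels (FPFunct C A) := ⟨fun _ => inferInstance⟩
  haveI : ∀ {X Y : FPFunct C A} (f : X ⟶ Y), IsIso (Abelian.coimageImageComparison f) :=
    fun f => isIso_coimageImageComparison_of_reflects
      (ObjectProperty.ι (fun F : C ⥤ A => PreservesFiniteProducts F)) f
  exact ⟨Abelian.ofCoimageImageComparisonIsIso, trivial⟩
end
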